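/- arXiv:2009.03430 — 2 statements merged into one kernel-verified Lean document; each statement's English description precedes it below -/
import Mathlib

section
/- Let Γ ⊆ {Ω_ij : 1 ≤ i < j ≤ n} with associated graph G on {1,…,n} having edges {i,j} for Ω_ij ∈ Γ. Then the Lie algebra generated by Γ equals the span of {Ω_ij : i and j lie in the same connected component of G, i < j}. -/
open Matrix
attribute [local instance 100] LieRing.ofAssociativeRing

/-- The standard basis element `Ω i j = E i j - E j i` of `so(n)`. -/
def Omega {n : ℕ} (i j : Fin n) : Matrix (Fin n) (Fin n) ℝ :=
  Matrix.single i j 1 - Matrix.single j i 1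

lemma E_mul {n : ℕ} (i j k l : Fin n) :
    single i j (1:ℝ) * single k l 1 =
      if j = k then single i l 1 else 0 := by
  split_ifs with h
  · subst h; simp
  · exact Matrix.single_mul_single_of_ne i j k h 1 (c := (1:ℝ)) (l := Fin n) (n := Fin n)

lemma omega_bracket {n : ℕ} (a b c d : Fin n) :
    ⁅Omega a b, Omega c d⁆ =
      (if b = c then (1:ℝ) else 0) • Omega a d + (if a = d then (1:ℝ) else 0) • Omega b c
        - (if b = d then (1:ℝ) else 0) • Omega a c - (if a = c then (1:ℝ) else 0) • Omega b d := by
  simp only [Omega, Ring.lie_def, sub_mul, mul_sub, E_mul, eq_comm, smul_sub, smul_ite,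
    one_smul, zero_smul, ite_smul]
  split_ifs <;> subst_eqs <;> abel

lemma omega_self {n : ℕ} (i : Fin n) : Omega i i = 0 := by simp [Omega]

lemma omega_swap {n : ℕ} (i j : Fin n) : Omega j i = -Omega i j := by
  simp [Omega]

theorem stmt14 {n : ℕ} (Γ : Set (Matrix (Fin n) (Fin n) ℝ))
    (hΓ : Γ ⊆ {M | ∃ i j : Fin n, i < j ∧ M = Omega i j}) :
    (LieSubalgebra.lieSpan ℝ (Matrix (Fin n) (Fin n) ℝ) Γ : Set (Matrix (Fin n) (Fin n) ℝ)) =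
      (Submodule.span ℝ {M : Matrix (Fin n) (Fin n) ℝ | ∃ i j : Fin n, i < j ∧
        (SimpleGraph.fromRel (fun a b : Fin n => Omega a b ∈ Γ)).Reachable i j ∧
        M = Omega i j} : Submodule ℝ (Matrix (Fin n) (Fin n) ℝ)) := by
  set G := SimpleGraph.fromRel (fun a b : Fin n => Omega a b ∈ Γ) with hG
  set S : Set (Matrix (Fin n) (Fin n) ℝ) :=
    {M | ∃ i j : Fin n, i < j ∧ G.Reachable i j ∧ M = Omega i j} with hS
  -- any reachable pair's Omega lies in span S
  have hmemS : ∀ i j : Fin n, G.Reachable i j → Omega i j ∈ Submodule.span ℝ S := by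
    intro i j hr
    rcases lt_trichotomy i j with h | h | h
    · exact Submodule.subset_span ⟨i, j, h, hr, rfl⟩
    · subst h; rw [omega_self]; exact zero_mem _
    · rw [omega_swap]
      exact neg_mem (Submodule.subset_span ⟨j, i, h, hr.symm, rfl⟩)
  -- span S is closed under bracket
  have hbr : ∀ x ∈ Submodule.span ℝ S, ∀ y ∈ Submodule.span ℝ S,
      ⁅x, y⁆ ∈ Submodule.span ℝ S := by
    intro x hx y hy
    induction hx using Submodule.span_induction generalizing y with
    | mem x hxS =>
      induction hy using Submodule.span_induction with
      | mem y hyS =>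
        obtain ⟨a, b, _, hab, rfl⟩ := hxS
        obtain ⟨c, d, _, hcd, rfl⟩ := hyS
        rw [omega_bracket]
        refine sub_mem (sub_mem (add_mem ?_ ?_) ?_) ?_
        · split_ifs with h
          · subst h; exact (Submodule.smul_mem _ _ (hmemS _ _ (hab.trans hcd)))
          · rw [zero_smul]; exact zero_mem _
        · split_ifs with h
          · subst h; exact (Submodule.smul_mem _ _ (hmemS _ _ (hab.symm.trans hcd.symm)))
          · rw [zero_smul]; exact zero_mem _
        · split_ifs with h
          · subst h; exact (Submodule.smul_mem _ _ (hmemS _ _ (hab.trans hcd.symm)))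
          · rw [zero_smul]; exact zero_mem _
        · split_ifs with h
          · subst h; exact (Submodule.smul_mem _ _ (hmemS _ _ (hab.symm.trans hcd)))
          · rw [zero_smul]; exact zero_mem _
      | zero => rw [lie_zero]; exact zero_mem _
      | add y z hy hz ihy ihz => rw [lie_add]; exact add_mem ihy ihz
      | smul t y hy ihy => rw [lie_smul]; exact Submodule.smul_mem _ _ ihy
    | zero => rw [zero_lie]; exact zero_mem _
    | add x z hx hz ihx ihz => rw [add_lie]; exact add_mem (ihx _ hy) (ihz _ hy)
    | smul t x hx ihx => rw [smul_lie]; exact Submodule.smul_mem _ _ (ihx _ hy)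
  let K : LieSubalgebra ℝ (Matrix (Fin n) (Fin n) ℝ) :=
    { Submodule.span ℝ S with lie_mem' := fun hx hy => hbr _ hx _ hy }
  have hKset : (K : Set (Matrix (Fin n) (Fin n) ℝ)) = (Submodule.span ℝ S : Submodule ℝ _) := rfl
  -- Γ ⊆ K
  have hΓK : Γ ⊆ (K : Set (Matrix (Fin n) (Fin n) ℝ)) := by
    intro M hM
    obtain ⟨i, j, hij, rfl⟩ := hΓ hM
    have hadj : G.Adj i j := by
      rw [hG]
      exact SimpleGraph.fromRel_adj .. |>.mpr ⟨hij.ne, Or.inl hM⟩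
    exact hmemS i j hadj.reachable
  -- reverse: S ⊆ lieSpan Γ
  have hSle : S ⊆ (LieSubalgebra.lieSpan ℝ (Matrix (Fin n) (Fin n) ℝ) Γ :
      Set (Matrix (Fin n) (Fin n) ℝ)) := by
    rintro M ⟨i, j, hij, hr, rfl⟩
    clear hij
    obtain ⟨w⟩ := hr
    induction w with
    | nil => rw [omega_self]; exact zero_mem (LieSubalgebra.lieSpan ℝ _ Γ)
    | @cons i k j hik w ih =>
      have hik' : Omega i k ∈ LieSubalgebra.lieSpan ℝ (Matrix (Fin n) (Fin n) ℝ) Γ := by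
        rw [hG] at hik
        rw [SimpleGraph.fromRel_adj] at hik
        rcases hik.2 with h | h
        · exact LieSubalgebra.subset_lieSpan h
        · rw [omega_swap]
          exact neg_mem (LieSubalgebra.subset_lieSpan h)
      by_cases hji : j = i
      · subst hji; rw [omega_self]; exact zero_mem (LieSubalgebra.lieSpan ℝ _ Γ)
      by_cases hjk : j = k
      · subst hjk; exact hik'
      · have hne1 : i ≠ k := by
          intro h; subst h; exact (hG ▸ hik).ne rfl
        have : Omega i j = ⁅Omega i k, Omega k j⁆ := by
          rw [omega_bracket]
          simp [hne1, Ne.symm hji, Ne.symm hjk]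
        rw [this]
        exact LieSubalgebra.lie_mem _ hik' ih
  ext x
  constructor
  · intro hx
    have : LieSubalgebra.lieSpan ℝ (Matrix (Fin n) (Fin n) ℝ) Γ ≤ K :=
      (LieSubalgebra.lieSpan_le).mpr hΓK
    exact this hx
  · intro hx
    refine Submodule.span_le.mpr ?_ hx
    intro M hM
    exact hSle hM
end

section
/- Let Γ and Σ be subsets of the standard basis {Ω_ij : 1 ≤ i < j ≤ n} of so(n) with Σ ⊆ Γ, and suppose Σ has exactly n−1 elements whose associated graph on {1,…,n} is a spanning tree. Then the Lie algebra generated by Σ is so(n), and hence the Lie algebra generated by Γ is so(n). -/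
open Matrix
attribute [local instance 100] LieRing.ofAssociativeRing

lemma stdBasis_transpose {n : ℕ} (i j : Fin n) (c : ℝ) :
    (Matrix.single i j c)ᵀ = Matrix.single j i c := by
  ext a b
  simp [Matrix.single, and_comm]

lemma Omega_transpose {n : ℕ} (i j : Fin n) : (Omega i j)ᵀ = -(Omega i j) := by
  simp [Omega, Matrix.transpose_sub, stdBasis_transpose, neg_sub]

lemma Omega_neg {n : ℕ} (i j : Fin n) : Omega j i = -(Omega i j) := by
  simp [Omega, neg_sub]

lemma Omega_bracket {n : ℕ} {i k j : Fin n} (hik : i ≠ k) (hkj : k ≠ j) (hij : i ≠ j) :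
    ⁅Omega i k, Omega k j⁆ = Omega i j := by
  simp only [Ring.lie_def, Omega, sub_mul, mul_sub]
  rw [Matrix.single_mul_single_same, Matrix.single_mul_single_same,
      Matrix.single_mul_single_of_ne _ _ _ _ hik,
      Matrix.single_mul_single_of_ne _ _ _ _ hkj,
      Matrix.single_mul_single_of_ne _ _ _ _ hij,
      Matrix.single_mul_single_of_ne _ _ _ _ hij.symm,
      Matrix.single_mul_single_of_ne _ _ _ _ hik.symm,
      Matrix.single_mul_single_of_ne _ _ _ _ hkj.symm]
  simp only [one_mul]
  abel

lemma Omega_apply {n : ℕ} (i j a b : Fin n) :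
    Omega i j a b = (if i = a ∧ j = b then (1:ℝ) else 0) - (if j = a ∧ i = b then 1 else 0) := by
  simp [Omega, Matrix.sub_apply, Matrix.single]

lemma skew_eq_sum {n : ℕ} (A : Matrix (Fin n) (Fin n) ℝ) (hA : Aᵀ = -A) :
    A = ∑ p ∈ Finset.univ.filter (fun p : Fin n × Fin n => p.1 < p.2),
        A p.1 p.2 • Omega p.1 p.2 := by
  have hsym : ∀ a b, A b a = -A a b := fun a b => congrFun (congrFun hA a) b
  ext a b
  rw [Matrix.sum_apply]
  rcases lt_trichotomy a b with hab | hab | hab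
  · rw [Finset.sum_eq_single (a, b)]
    · simp [Omega_apply, hab.ne']
    · rintro ⟨p1, p2⟩ hp hne
      simp only [Finset.mem_filter] at hp
      simp only [Matrix.smul_apply, Omega_apply, smul_eq_mul]
      have h1 : ¬(p1 = a ∧ p2 = b) := by
        rintro ⟨rfl, rfl⟩; exact hne rfl
      have h2 : ¬(p2 = a ∧ p1 = b) := by
        rintro ⟨rfl, rfl⟩; exact absurd hp.2 (asymm hab)
      simp [h1, h2]
    · intro h
      exact absurd (Finset.mem_filter.mpr ⟨Finset.mem_univ _, hab⟩) (by simpa using h)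
  · subst hab
    have hdiag : A a a = 0 := by have := hsym a a; linarith
    rw [Finset.sum_eq_zero, hdiag]
    rintro ⟨p1, p2⟩ hp
    simp only [Finset.mem_filter] at hp
    have h1 : ¬(p1 = a ∧ p2 = a) := by rintro ⟨rfl, rfl⟩; exact absurd hp.2 (lt_irrefl _)
    have h2 : ¬(p2 = a ∧ p1 = a) := by rintro ⟨rfl, rfl⟩; exact absurd hp.2 (lt_irrefl _)
    simp [Omega_apply, h1, h2]
  · rw [Finset.sum_eq_single (b, a)]
    · have h1 : ¬(b = a ∧ a = b) := by rintro ⟨rfl, -⟩; exact absurd hab (lt_irrefl _)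
      simp [Omega_apply, h1, hsym a b]
    · rintro ⟨p1, p2⟩ hp hne
      simp only [Finset.mem_filter] at hp
      simp only [Matrix.smul_apply, Omega_apply, smul_eq_mul]
      have h1 : ¬(p1 = a ∧ p2 = b) := by
        rintro ⟨rfl, rfl⟩; exact absurd hp.2 (asymm hab)
      have h2 : ¬(p2 = a ∧ p1 = b) := by
        rintro ⟨rfl, rfl⟩; exact hne rfl
      simp [h1, h2]
    · intro h
      exact absurd (Finset.mem_filter.mpr ⟨Finset.mem_univ _, hab⟩) (by simpa using h)

def skewLie (n : ℕ) : LieSubalgebra ℝ (Matrix (Fin n) (Fin n) ℝ) where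
  carrier := {A | Aᵀ = -A}
  add_mem' := by
    intro a b ha hb
    simp only [Set.mem_setOf_eq] at *
    rw [Matrix.transpose_add, ha, hb, neg_add]
  zero_mem' := by simp
  smul_mem' := by
    intro c x hx
    simp only [Set.mem_setOf_eq] at *
    rw [Matrix.transpose_smul, hx, smul_neg]
  lie_mem' := by
    intro x y hx hy
    simp only [Set.mem_setOf_eq] at *
    rw [Ring.lie_def, Matrix.transpose_sub, Matrix.transpose_mul, Matrix.transpose_mul,
      hx, hy, neg_mul_neg, neg_mul_neg, neg_sub]

theorem stmt19 {n : ℕ} (Γ : Set (Matrix (Fin n) (Fin n) ℝ))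
    (S : Finset (Matrix (Fin n) (Fin n) ℝ))
    (hΓ : Γ ⊆ {M | ∃ i j : Fin n, i < j ∧ M = Omega i j})
    (hSΓ : (S : Set (Matrix (Fin n) (Fin n) ℝ)) ⊆ Γ)
    (hcard : S.card = n - 1)
    (htree : (SimpleGraph.fromRel (fun i j : Fin n => Omega i j ∈ S)).IsTree) :
    ((LieSubalgebra.lieSpan ℝ (Matrix (Fin n) (Fin n) ℝ)
        (S : Set (Matrix (Fin n) (Fin n) ℝ)) : Set (Matrix (Fin n) (Fin n) ℝ)) =
      {A : Matrix (Fin n) (Fin n) ℝ | Aᵀ = -A}) ∧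
    ((LieSubalgebra.lieSpan ℝ (Matrix (Fin n) (Fin n) ℝ) Γ :
        Set (Matrix (Fin n) (Fin n) ℝ)) =
      {A : Matrix (Fin n) (Fin n) ℝ | Aᵀ = -A}) := by
  set L := LieSubalgebra.lieSpan ℝ (Matrix (Fin n) (Fin n) ℝ)
      (S : Set (Matrix (Fin n) (Fin n) ℝ)) with hL
  -- everything in Γ (and hence S) is skew
  have hΓskew : Γ ⊆ (skewLie n : Set (Matrix (Fin n) (Fin n) ℝ)) := by
    intro M hM
    obtain ⟨i, j, -, rfl⟩ := hΓ hM
    exact Omega_transpose i j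
  have h1 : L ≤ skewLie n := (LieSubalgebra.lieSpan_le).mpr (fun M hM => hΓskew (hSΓ hM))
  have h2 : LieSubalgebra.lieSpan ℝ (Matrix (Fin n) (Fin n) ℝ) Γ ≤ skewLie n :=
    (LieSubalgebra.lieSpan_le).mpr hΓskew
  -- edges give members of the span
  have hedge : ∀ i j : Fin n,
      (SimpleGraph.fromRel (fun i j : Fin n => Omega i j ∈ S)).Adj i j →
      Omega i j ∈ L := by
    intro i j hadj
    rw [SimpleGraph.fromRel_adj] at hadj
    rcases hadj.2 with h | h
    · exact LieSubalgebra.subset_lieSpan h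
    · rw [Omega_neg j i]
      exact neg_mem (LieSubalgebra.subset_lieSpan h)
  -- walks give members of the span
  have hwalk : ∀ i j : Fin n,
      ∀ _w : (SimpleGraph.fromRel (fun i j : Fin n => Omega i j ∈ S)).Walk i j,
      i ≠ j → Omega i j ∈ L := by
    intro i j w
    induction w with
    | nil => intro h; exact absurd rfl h
    | @cons a k c hadj p ih =>
      intro hac
      by_cases hkc : k = c
      · subst hkc; exact hedge _ _ hadj
      · have hak : a ≠ k := hadj.ne
        have h1 := hedge _ _ hadj
        have h2 := ih hkc
        rw [← Omega_bracket hak hkc hac]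
        exact LieSubalgebra.lie_mem _ h1 h2
  -- all Omegas are in the span
  have hall : ∀ i j : Fin n, i ≠ j → Omega i j ∈ L := by
    intro i j hij
    obtain ⟨w⟩ := htree.isConnected i j
    exact hwalk i j w hij
  -- skew matrices are in the span
  have hskew : {A : Matrix (Fin n) (Fin n) ℝ | Aᵀ = -A} ⊆ (L : Set _) := by
    intro A hA
    rw [skew_eq_sum A hA]
    refine sum_mem (fun p hp => ?_)
    rw [Finset.mem_filter] at hp
    exact L.smul_mem _ (hall p.1 p.2 hp.2.ne)
  constructor
  · exact le_antisymm h1 hskew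
  · refine le_antisymm h2 ?_
    exact hskew.trans (LieSubalgebra.lieSpan_mono hSΓ)
end
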